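/- Let s > 0 and σ_s be the measure on ℝ⁴ defined by ∫g dσ_s = ∫_{ℝ³} g(y, √(s²+|y|²)) dy/√(s²+|y|²). Then σ_s ∗ σ_s equals the function (ξ,τ) ↦ 2π·(1 − 4s²/(τ²−|ξ|²))^{1/2}·𝟙{τ ≥ √((2s)²+|ξ|²)}. In particular ‖σ_s ∗ σ_s‖_∞ = 2π and σ_s ∗ σ_s(ξ,τ) < 2π for every (ξ,τ) ∈ ℝ⁴. -/

import Mathlib

open MeasureTheory Real

noncomputable def hypMeasure (d : ℕ) (s : ℝ) :
    Measure (EuclideanSpace ℝ (Fin d) × ℝ) :=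
  Measure.map (fun y => (y, Real.sqrt (s ^ 2 + ‖y‖ ^ 2)))
    ((volume : Measure (EuclideanSpace ℝ (Fin d))).withDensity
      (fun y => ENNReal.ofReal (1 / Real.sqrt (s ^ 2 + ‖y‖ ^ 2))))

noncomputable def doubleDensity3 (s : ℝ) (p : EuclideanSpace ℝ (Fin 3) × ℝ) : ℝ :=
  if Real.sqrt ((2 * s) ^ 2 + ‖p.1‖ ^ 2) ≤ p.2 then
    2 * Real.pi * Real.sqrt (1 - 4 * s ^ 2 / (p.2 ^ 2 - ‖p.1‖ ^ 2)) else 0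

section Aux
open Set Filter


noncomputable def tza (a u v : ℝ) : ℝ := (u^2 - v^2 + a^2)/(2*a)

def Sset (s a : ℝ) : Set (ℝ × ℝ) :=
  {q | 0 < q.1 ∧ 0 < q.2 ∧ s^2 + tza a q.1 q.2 ^ 2 < q.1^2}

noncomputable def Fa (s a τ : ℝ) : ℝ :=
  if Real.sqrt ((2*s)^2 + a^2) ≤ τ then Real.sqrt (1 - 4*s^2/(τ^2 - a^2)) else 0

lemma Sset_open (s a : ℝ) : IsOpen (Sset s a) := by
  have h1 : IsOpen {q : ℝ × ℝ | 0 < q.1} := isOpen_lt continuous_const continuous_fst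
  have h2 : IsOpen {q : ℝ × ℝ | 0 < q.2} := isOpen_lt continuous_const continuous_snd
  have h3 : IsOpen {q : ℝ × ℝ | s^2 + tza a q.1 q.2 ^ 2 < q.1^2} := by
    apply isOpen_lt
    · unfold tza; fun_prop
    · fun_prop
  exact h1.inter (h2.inter h3)

set_option maxHeartbeats 1000000 in
lemma slice_eq_Ioo {s a τ : ℝ} (hs : 0 < s) (ha : 0 < a)
    (hτ : Real.sqrt ((2*s)^2 + a^2) ≤ τ) :
    {u : ℝ | (u, τ - u) ∈ Sset s a} =
      Set.Ioo (τ/2 - a/2 * Real.sqrt (1 - 4*s^2/(τ^2-a^2)))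
              (τ/2 + a/2 * Real.sqrt (1 - 4*s^2/(τ^2-a^2))) := by
  have h0 : (0:ℝ) ≤ (2*s)^2 + a^2 := by positivity
  have hτa : a < τ := by
    calc a = Real.sqrt (a^2) := (Real.sqrt_sq ha.le).symm
    _ < Real.sqrt ((2*s)^2 + a^2) := by
        apply Real.sqrt_lt_sqrt (by positivity); nlinarith
    _ ≤ τ := hτ
  have hτ0 : 0 < τ := lt_trans ha hτa
  have hτsq : (2*s)^2 + a^2 ≤ τ^2 := by
    have := Real.sq_sqrt h0
    nlinarith [Real.sqrt_nonneg ((2*s)^2 + a^2)]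
  have hD : (0:ℝ) < τ^2 - a^2 := by nlinarith
  have hin : (0:ℝ) ≤ 1 - 4*s^2/(τ^2-a^2) := by
    rw [sub_nonneg, div_le_one hD]; nlinarith
  set c := Real.sqrt (1 - 4*s^2/(τ^2-a^2)) with hcdef
  have hc0 : 0 ≤ c := Real.sqrt_nonneg _
  have hc2 : c^2 = 1 - 4*s^2/(τ^2-a^2) := Real.sq_sqrt hin
  have hc1 : c ≤ 1 := by
    rw [hcdef]
    have h7 : 0 < 4*s^2/(τ^2-a^2) := by positivity
    calc Real.sqrt (1 - 4*s^2/(τ^2-a^2)) ≤ Real.sqrt 1 :=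
          Real.sqrt_le_sqrt (by linarith)
      _ = 1 := Real.sqrt_one
  clear_value c
  clear hcdef
  have hc2' : c^2 * (τ^2-a^2) = τ^2-a^2-4*s^2 := by
    rw [hc2]; field_simp
  have hident : ∀ u : ℝ, u^2 - s^2 - tza a u (τ-u) ^ 2
      = (τ^2-a^2-4*s^2)/4 - (u-τ/2)^2*(τ^2-a^2)/a^2 := by
    intro u; unfold tza; field_simp; ring
  ext u
  simp only [Sset, Set.mem_setOf_eq, Set.mem_Ioo]
  constructor
  · rintro ⟨hu, hv, hcond⟩
    have h1 : (u-τ/2)^2*(τ^2-a^2)/a^2 < (τ^2-a^2-4*s^2)/4 := by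
      have := hident u; nlinarith
    rw [div_lt_div_iff₀ (by positivity) (by positivity)] at h1
    have h2 : (u-τ/2)^2 < (a/2*c)^2 := by nlinarith [h1, hc2', hD, sq_nonneg c]
    have h3 := abs_lt.mp (abs_lt_of_sq_lt_sq h2 (by positivity))
    constructor
    · linarith [h3.1]
    · linarith [h3.2]
  · rintro ⟨h1, h2⟩
    have hac : a/2*c ≤ a/2 := by nlinarith
    have hw2 : (u-τ/2)^2 < (a/2*c)^2 := sq_lt_sq' (by linarith) (by linarith)
    have hua : 0 < u := by linarith [h1, hac, hτa]
    have hva : 0 < τ - u := by linarith [h2, hac, hτa]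
    refine ⟨hua, hva, ?_⟩
    have h4 := hident u
    have h5 : (u-τ/2)^2*(τ^2-a^2)/a^2 < (τ^2-a^2-4*s^2)/4 := by
      rw [div_lt_div_iff₀ (by positivity) (by positivity)]
      nlinarith [hw2, hc2', hD]
    nlinarith [h4, h5]

lemma slice_eq_empty {s a τ : ℝ} (hs : 0 < s) (ha : 0 < a)
    (hτ : τ < Real.sqrt ((2*s)^2 + a^2)) :
    {u : ℝ | (u, τ - u) ∈ Sset s a} = ∅ := by
  ext u
  simp only [Sset, Set.mem_setOf_eq, Set.mem_empty_iff_false, iff_false]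
  rintro ⟨hu, hv, hcond⟩
  set t := tza a u (τ-u) with ht
  set r2 := u^2 - s^2 - t^2 with hr2
  have hr2pos : 0 < r2 := by rw [hr2]; nlinarith
  have husq : u^2 = s^2 + t^2 + r2 := by rw [hr2]; ring
  have hvsq : (τ-u)^2 = s^2 + (a-t)^2 + r2 := by
    rw [hr2, ht]; unfold tza; field_simp; ring
  have hCS : (u*(τ-u))^2 = (s^2 + t*(a-t) + r2)^2 + (s^2+r2)*(a-2*t)^2 := by
    rw [mul_pow, husq, hvsq]; ring
  have huv : s^2 + t*(a-t) + r2 ≤ u*(τ-u) := by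
    nlinarith [mul_pos hu hv]
  have hτsq : (2*s)^2 + a^2 < τ^2 := by nlinarith
  have hτpos : 0 < τ := by nlinarith
  have : Real.sqrt ((2*s)^2+a^2) < τ → False := fun h => absurd hτ (not_lt.mpr h.le)
  apply this
  calc Real.sqrt ((2*s)^2+a^2) < Real.sqrt (τ^2) := Real.sqrt_lt_sqrt (by positivity) hτsq
  _ = τ := Real.sqrt_sq hτpos.le

lemma lintegral_Sset (s a : ℝ) (hs : 0 < s) (ha : 0 < a) (g : ℝ → ENNReal) (hg : Measurable g) :
    ∫⁻ q in Sset s a, g (q.1 + q.2) = ∫⁻ τ, g τ * ENNReal.ofReal (a * Fa s a τ) := by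
  have hSm : MeasurableSet (Sset s a) := (Sset_open s a).measurableSet
  have hgm : Measurable (fun q : ℝ × ℝ => g (q.1 + q.2)) :=
    hg.comp (measurable_fst.add measurable_snd)
  classical
  rw [← lintegral_indicator hSm]
  rw [Measure.volume_eq_prod, lintegral_prod _ ((hgm.indicator hSm).aemeasurable)]
  have step1 : ∀ u : ℝ, (∫⁻ v, (Sset s a).indicator (fun q => g (q.1+q.2)) (u, v))
      = ∫⁻ τ, (if (u, τ-u) ∈ Sset s a then g τ else 0) := by
    intro u
    have h := lintegral_add_left_eq_self (μ := volume)
      (fun τ => if (u, τ-u) ∈ Sset s a then g τ else 0) u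
    rw [← h]
    congr 1
    funext v
    simp [add_sub_cancel_left, Set.indicator_apply]
  simp only [step1]
  rw [lintegral_lintegral_swap]
  · congr 1
    funext τ
    by_cases hτ : Real.sqrt ((2*s)^2 + a^2) ≤ τ
    · have hset := slice_eq_Ioo hs ha hτ
      have heq : (fun u => if (u, τ-u) ∈ Sset s a then g τ else 0)
          = fun u => (Set.Ioo (τ/2 - a/2 * Real.sqrt (1 - 4*s^2/(τ^2-a^2)))
              (τ/2 + a/2 * Real.sqrt (1 - 4*s^2/(τ^2-a^2)))).indicator (fun _ => g τ) u := by
        funext u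
        by_cases hmem : (u, τ-u) ∈ Sset s a
        · rw [if_pos hmem, Set.indicator_of_mem]
          exact (Set.ext_iff.mp hset u).mp hmem
        · rw [if_neg hmem, Set.indicator_of_notMem]
          intro hIoo
          exact hmem ((Set.ext_iff.mp hset u).mpr hIoo)
      rw [heq, lintegral_indicator_const measurableSet_Ioo, Real.volume_Ioo]
      congr 1
      unfold Fa
      rw [if_pos hτ]
      congr 1
      ring
    · have hset := slice_eq_empty hs ha (not_le.mp hτ)
      have heq : (fun u => if (u, τ-u) ∈ Sset s a then g τ else 0) = fun _ => (0:ENNReal) := by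
        funext u
        rw [if_neg]
        intro hmem
        exact absurd ((Set.ext_iff.mp hset u).mp hmem) (Set.notMem_empty u)
      rw [heq, lintegral_zero]
      unfold Fa
      rw [if_neg hτ]
      simp
  · have huncurry : (Function.uncurry fun u τ => if (u, τ-u) ∈ Sset s a then g τ else 0)
        = fun p : ℝ × ℝ => ((fun q : ℝ × ℝ => (q.1, q.2 - q.1)) ⁻¹' (Sset s a)).indicator
            (fun p : ℝ × ℝ => g p.2) p := by
      funext p
      obtain ⟨u, τ⟩ := p
      simp [Function.uncurry_apply_pair, Set.indicator_apply, Set.mem_preimage]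
    rw [huncurry]
    exact ((hg.comp measurable_snd).indicator (hSm.preimage (by fun_prop))).aemeasurable

noncomputable def Phi (s a : ℝ) (q : ℝ × ℝ) : ℝ × ℝ :=
  (Real.sqrt (s^2 + q.1^2 + q.2^2), Real.sqrt (s^2 + (a - q.1)^2 + q.2^2))

lemma clm_smul_helper (c t r : ℝ) (hc : c ≠ 0) :
    ((1/(2*c)) • ((2*t) • ContinuousLinearMap.fst ℝ ℝ ℝ + (2*r) • ContinuousLinearMap.snd ℝ ℝ ℝ))
      = ((t/c) • ContinuousLinearMap.fst ℝ ℝ ℝ + (r/c) • ContinuousLinearMap.snd ℝ ℝ ℝ) := by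
  apply ContinuousLinearMap.ext
  intro x
  simp only [ContinuousLinearMap.smul_apply, ContinuousLinearMap.add_apply,
    ContinuousLinearMap.coe_fst', ContinuousLinearMap.coe_snd', smul_eq_mul]
  field_simp

lemma Phi_deriv (s a : ℝ) (hs : 0 < s) (q : ℝ × ℝ) :
    HasFDerivAt (Phi s a)
      (LinearMap.toContinuousLinearMap (Matrix.toLin (Module.Basis.finTwoProd ℝ) (Module.Basis.finTwoProd ℝ)
        !![q.1 / Real.sqrt (s^2 + q.1^2 + q.2^2), q.2 / Real.sqrt (s^2 + q.1^2 + q.2^2);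
           (q.1 - a) / Real.sqrt (s^2 + (a - q.1)^2 + q.2^2),
           q.2 / Real.sqrt (s^2 + (a - q.1)^2 + q.2^2)])) q := by
  rw [Matrix.toLin_finTwoProd_toContinuousLinearMap]
  have hu0 : (0:ℝ) < s^2 + q.1^2 + q.2^2 := by positivity
  have hv0 : (0:ℝ) < s^2 + (a - q.1)^2 + q.2^2 := by positivity
  have hu0' : Real.sqrt (s^2 + q.1^2 + q.2^2) ≠ 0 := by positivity
  have hv0' : Real.sqrt (s^2 + (a - q.1)^2 + q.2^2) ≠ 0 := by positivity
  have h1 : HasFDerivAt (fun q : ℝ × ℝ => q.1^2)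
      ((2*q.1) • ContinuousLinearMap.fst ℝ ℝ ℝ) q := by
    have := (hasDerivAt_pow 2 q.1).comp_hasFDerivAt q (hasFDerivAt_fst (𝕜 := ℝ) (p := q))
    simpa [pow_one, Function.comp_def] using this
  have h2 : HasFDerivAt (fun q : ℝ × ℝ => q.2^2)
      ((2*q.2) • ContinuousLinearMap.snd ℝ ℝ ℝ) q := by
    have := (hasDerivAt_pow 2 q.2).comp_hasFDerivAt q (hasFDerivAt_snd (𝕜 := ℝ) (p := q))
    simpa [pow_one, Function.comp_def] using this
  have h1' : HasFDerivAt (fun q : ℝ × ℝ => (a - q.1)^2)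
      ((2*(q.1-a)) • ContinuousLinearMap.fst ℝ ℝ ℝ) q := by
    have hd : HasDerivAt (fun y : ℝ => (a - y)^2) (2*(a - q.1)*(-1)) q.1 := by
      have := ((hasDerivAt_id q.1).const_sub a).pow 2
      simpa [pow_one, Pi.pow_def] using this
    have := hd.comp_hasFDerivAt q (hasFDerivAt_fst (𝕜 := ℝ) (p := q))
    rw [show 2*(q.1-a) = 2*(a-q.1)*(-1) by ring]
    exact this
  have inner1 : HasFDerivAt (fun q : ℝ × ℝ => s^2 + q.1^2 + q.2^2)
      ((2*q.1) • ContinuousLinearMap.fst ℝ ℝ ℝ + (2*q.2) • ContinuousLinearMap.snd ℝ ℝ ℝ) q := by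
    simpa [add_assoc] using ((h1.add h2).const_add (s^2))
  have inner2 : HasFDerivAt (fun q : ℝ × ℝ => s^2 + (a - q.1)^2 + q.2^2)
      ((2*(q.1-a)) • ContinuousLinearMap.fst ℝ ℝ ℝ + (2*q.2) • ContinuousLinearMap.snd ℝ ℝ ℝ) q := by
    simpa [add_assoc] using ((h1'.add h2).const_add (s^2))
  have sq1 := (Real.hasDerivAt_sqrt hu0.ne').comp_hasFDerivAt q inner1
  have sq2 := (Real.hasDerivAt_sqrt hv0.ne').comp_hasFDerivAt q inner2
  rw [clm_smul_helper _ _ _ hu0'] at sq1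
  rw [clm_smul_helper _ _ _ hv0'] at sq2
  have goal := HasFDerivAt.prodMk sq1 sq2
  have : (q.1-a)/Real.sqrt (s^2 + (a - q.1)^2 + q.2^2) = (q.1-a)/Real.sqrt (s^2 + (a - q.1)^2 + q.2^2) := rfl
  exact goal

lemma Phi_image (s a : ℝ) (hs : 0 < s) (ha : 0 < a) :
    Phi s a '' (Set.univ ×ˢ Set.Ioi (0:ℝ)) = Sset s a := by
  ext ⟨u, v⟩
  constructor
  · rintro ⟨⟨t, r⟩, ⟨-, hr⟩, heq⟩
    have hr : 0 < r := hr
    have hA : (0:ℝ) < s^2 + t^2 + r^2 := by positivity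
    have hB : (0:ℝ) < s^2 + (a-t)^2 + r^2 := by positivity
    obtain ⟨hu, hv⟩ : Real.sqrt (s^2 + t^2 + r^2) = u ∧ Real.sqrt (s^2 + (a-t)^2 + r^2) = v := by
      rw [Phi, Prod.mk.injEq] at heq; exact heq
    have hupos : 0 < u := hu ▸ Real.sqrt_pos.mpr hA
    have hvpos : 0 < v := hv ▸ Real.sqrt_pos.mpr hB
    have hu2 : u^2 = s^2 + t^2 + r^2 := by rw [← hu, Real.sq_sqrt hA.le]
    have hv2 : v^2 = s^2 + (a-t)^2 + r^2 := by rw [← hv, Real.sq_sqrt hB.le]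
    refine ⟨hupos, hvpos, ?_⟩
    have ht : tza a u v = t := by
      unfold tza
      rw [hu2, hv2]
      field_simp
      ring
    rw [ht, hu2]
    nlinarith
  · rintro ⟨hu, hv, hcond⟩
    set t := tza a u v with htdef
    have hr2 : 0 < u^2 - s^2 - t^2 := by nlinarith
    refine ⟨(t, Real.sqrt (u^2 - s^2 - t^2)), ⟨Set.mem_univ _, Real.sqrt_pos.mpr hr2⟩, ?_⟩
    have hrsq : Real.sqrt (u^2 - s^2 - t^2) ^ 2 = u^2 - s^2 - t^2 := Real.sq_sqrt hr2.le
    rw [Phi, Prod.mk.injEq]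
    constructor
    · rw [hrsq, show s^2 + t^2 + (u^2 - s^2 - t^2) = u^2 by ring, Real.sqrt_sq hu.le]
    · rw [hrsq]
      have : s^2 + (a-t)^2 + (u^2 - s^2 - t^2) = v^2 := by
        rw [htdef]; unfold tza; field_simp; ring
      rw [this, Real.sqrt_sq hv.le]

lemma Phi_injOn (s a : ℝ) (hs : 0 < s) (ha : 0 < a) :
    Set.InjOn (Phi s a) (Set.univ ×ˢ Set.Ioi (0:ℝ)) := by
  rintro ⟨t, r⟩ ⟨-, hr⟩ ⟨t', r'⟩ ⟨-, hr'⟩ heq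
  have hr : (0:ℝ) < r := hr
  have hr' : (0:ℝ) < r' := hr'
  obtain ⟨h1, h2⟩ : Real.sqrt (s^2 + t^2 + r^2) = Real.sqrt (s^2 + t'^2 + r'^2) ∧
      Real.sqrt (s^2 + (a-t)^2 + r^2) = Real.sqrt (s^2 + (a-t')^2 + r'^2) := by
    rw [Phi, Phi, Prod.mk.injEq] at heq; exact heq
  have hA : s^2 + t^2 + r^2 = s^2 + t'^2 + r'^2 := by
    have h3 := congrArg (fun x : ℝ => x^2) h1
    rwa [Real.sq_sqrt (by positivity), Real.sq_sqrt (by positivity)] at h3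
  have hB : s^2 + (a-t)^2 + r^2 = s^2 + (a-t')^2 + r'^2 := by
    have h3 := congrArg (fun x : ℝ => x^2) h2
    rwa [Real.sq_sqrt (by positivity), Real.sq_sqrt (by positivity)] at h3
  have ht : t = t' := by nlinarith
  have hrr : r = r' := by
    have h4 : r^2 = r'^2 := by rw [ht] at hA; linarith
    rw [← Real.sqrt_sq hr.le, h4, Real.sqrt_sq hr'.le]
  simp [ht, hrr]

lemma lintegral_Sset_eq (s a : ℝ) (hs : 0 < s) (ha : 0 < a) (g : ℝ × ℝ → ENNReal) :
    ∫⁻ p in Sset s a, g p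
      = ∫⁻ q in Set.univ ×ˢ Set.Ioi (0:ℝ),
          ENNReal.ofReal (a * q.2 / (Real.sqrt (s^2+q.1^2+q.2^2) * Real.sqrt (s^2+(a-q.1)^2+q.2^2)))
            * g (Phi s a q) := by
  rw [← Phi_image s a hs ha]
  rw [lintegral_image_eq_lintegral_abs_det_fderiv_mul volume
    (MeasurableSet.univ.prod measurableSet_Ioi)
    (fun x _ => (Phi_deriv s a hs x).hasFDerivWithinAt) (Phi_injOn s a hs ha) g]
  apply setLIntegral_congr_fun (MeasurableSet.univ.prod measurableSet_Ioi)
  intro q hq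
  beta_reduce
  have hq2 : 0 < q.2 := hq.2
  have hu0 : (0:ℝ) < Real.sqrt (s^2 + q.1^2 + q.2^2) := Real.sqrt_pos.mpr (by positivity)
  have hv0 : (0:ℝ) < Real.sqrt (s^2 + (a-q.1)^2 + q.2^2) := Real.sqrt_pos.mpr (by positivity)
  congr 1
  have hdet : (LinearMap.toContinuousLinearMap (Matrix.toLin (Module.Basis.finTwoProd ℝ) (Module.Basis.finTwoProd ℝ)
        !![q.1 / Real.sqrt (s^2 + q.1^2 + q.2^2), q.2 / Real.sqrt (s^2 + q.1^2 + q.2^2);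
           (q.1 - a) / Real.sqrt (s^2 + (a - q.1)^2 + q.2^2),
           q.2 / Real.sqrt (s^2 + (a - q.1)^2 + q.2^2)])).det
      = a * q.2 / (Real.sqrt (s^2+q.1^2+q.2^2) * Real.sqrt (s^2+(a-q.1)^2+q.2^2)) := by
    simp only [LinearMap.det_toContinuousLinearMap, LinearMap.det_toLin, Matrix.det_fin_two_of]
    field_simp
    ring
  rw [hdet, abs_of_pos (by positivity)]

lemma lintegral_polar (f : ℝ × ℝ → ENNReal) :
    ∫⁻ p, f p = ∫⁻ p in polarCoord.target, ENNReal.ofReal p.1 * f (polarCoord.symm p) := by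
  set B : ℝ × ℝ → ℝ × ℝ →L[ℝ] ℝ × ℝ := fun p =>
    LinearMap.toContinuousLinearMap (Matrix.toLin (Module.Basis.finTwoProd ℝ) (Module.Basis.finTwoProd ℝ)
      !![Real.cos p.2, -p.1 * Real.sin p.2; Real.sin p.2, p.1 * Real.cos p.2]) with hB
  have A : ∀ p ∈ polarCoord.target, HasFDerivWithinAt polarCoord.symm (B p) polarCoord.target p :=
    fun p _ => (hasFDerivAt_polarCoord_symm p).hasFDerivWithinAt
  have B_det : ∀ p, (B p).det = p.1 := by
    intro p
    conv_rhs => rw [← one_mul p.1, ← cos_sq_add_sin_sq p.2]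
    simp only [hB, neg_mul, LinearMap.det_toContinuousLinearMap, LinearMap.det_toLin,
      Matrix.det_fin_two_of, sub_neg_eq_add]
    ring
  have inj : Set.InjOn polarCoord.symm polarCoord.target := polarCoord.symm.injOn
  have im := lintegral_image_eq_lintegral_abs_det_fderiv_mul volume
    polarCoord.open_target.measurableSet A inj f
  rw [polarCoord.symm_image_target_eq_source] at im
  calc ∫⁻ p, f p = ∫⁻ p in polarCoord.source, f p := by
        rw [← setLIntegral_univ]
        exact (setLIntegral_congr polarCoord_source_ae_eq_univ.symm)
    _ = ∫⁻ p in polarCoord.target, ENNReal.ofReal |(B p).det| * f (polarCoord.symm p) := im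
    _ = ∫⁻ p in polarCoord.target, ENNReal.ofReal p.1 * f (polarCoord.symm p) := by
        apply setLIntegral_congr_fun polarCoord.open_target.measurableSet
        intro p hp
        beta_reduce
        rw [B_det, abs_of_pos hp.1]

lemma key_coords (s a : ℝ) (hs : 0 < s) (ha : 0 < a) (g : ℝ → ENNReal) (hg : Measurable g) :
    ∫⁻ z : ℝ × ℝ × ℝ,
        g (Real.sqrt (s^2 + z.1^2 + z.2.1^2 + z.2.2^2)
            + Real.sqrt (s^2 + (a - z.1)^2 + z.2.1^2 + z.2.2^2))
          * ENNReal.ofReal (1 / (Real.sqrt (s^2 + z.1^2 + z.2.1^2 + z.2.2^2)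
              * Real.sqrt (s^2 + (a - z.1)^2 + z.2.1^2 + z.2.2^2)))
      = ∫⁻ τ, g τ * ENNReal.ofReal (2 * π * Fa s a τ) := by
  have hsqrt1 : Measurable fun z : ℝ × ℝ × ℝ => Real.sqrt (s^2 + z.1^2 + z.2.1^2 + z.2.2^2) := by
    fun_prop
  have hsqrt2 : Measurable fun z : ℝ × ℝ × ℝ =>
      Real.sqrt (s^2 + (a - z.1)^2 + z.2.1^2 + z.2.2^2) := by fun_prop
  have hint : Measurable fun z : ℝ × ℝ × ℝ =>
      g (Real.sqrt (s^2 + z.1^2 + z.2.1^2 + z.2.2^2)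
          + Real.sqrt (s^2 + (a - z.1)^2 + z.2.1^2 + z.2.2^2))
        * ENNReal.ofReal (1 / (Real.sqrt (s^2 + z.1^2 + z.2.1^2 + z.2.2^2)
            * Real.sqrt (s^2 + (a - z.1)^2 + z.2.1^2 + z.2.2^2))) := by
    apply Measurable.mul
    · exact hg.comp (hsqrt1.add hsqrt2)
    · exact ENNReal.measurable_ofReal.comp ((hsqrt1.mul hsqrt2).const_div 1)
  rw [Measure.volume_eq_prod, lintegral_prod _ hint.aemeasurable]
  -- inner integral via polar coordinates
  have step1 : ∀ t : ℝ,
      (∫⁻ w : ℝ × ℝ, g (Real.sqrt (s^2 + t^2 + w.1^2 + w.2^2)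
            + Real.sqrt (s^2 + (a - t)^2 + w.1^2 + w.2^2))
          * ENNReal.ofReal (1 / (Real.sqrt (s^2 + t^2 + w.1^2 + w.2^2)
              * Real.sqrt (s^2 + (a - t)^2 + w.1^2 + w.2^2))))
        = ∫⁻ r in Set.Ioi (0:ℝ), ENNReal.ofReal (2*π) * (ENNReal.ofReal r *
            (g (Real.sqrt (s^2 + t^2 + r^2) + Real.sqrt (s^2 + (a - t)^2 + r^2))
              * ENNReal.ofReal (1 / (Real.sqrt (s^2 + t^2 + r^2)
                  * Real.sqrt (s^2 + (a - t)^2 + r^2))))) := by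
    intro t
    rw [lintegral_polar]
    have harg : ∀ p : ℝ × ℝ, ∀ c : ℝ,
        c + (p.1 * Real.cos p.2)^2 + (p.1 * Real.sin p.2)^2 = c + p.1^2 := by
      intro p c
      have h := Real.cos_sq_add_sin_sq p.2
      nlinarith [h]
    have heq : ∀ p : ℝ × ℝ,
        ENNReal.ofReal p.1 * (g (Real.sqrt (s^2 + t^2 + (polarCoord.symm p).1^2 + (polarCoord.symm p).2^2)
            + Real.sqrt (s^2 + (a - t)^2 + (polarCoord.symm p).1^2 + (polarCoord.symm p).2^2))
          * ENNReal.ofReal (1 / (Real.sqrt (s^2 + t^2 + (polarCoord.symm p).1^2 + (polarCoord.symm p).2^2)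
              * Real.sqrt (s^2 + (a - t)^2 + (polarCoord.symm p).1^2 + (polarCoord.symm p).2^2))))
        = ENNReal.ofReal p.1 *
            (g (Real.sqrt (s^2 + t^2 + p.1^2) + Real.sqrt (s^2 + (a - t)^2 + p.1^2))
              * ENNReal.ofReal (1 / (Real.sqrt (s^2 + t^2 + p.1^2)
                  * Real.sqrt (s^2 + (a - t)^2 + p.1^2)))) := by
      intro p
      rw [polarCoord_symm_apply]
      simp only
      rw [harg p (s^2 + t^2), harg p (s^2 + (a-t)^2)]
    simp only [heq]
    rw [polarCoord_target, Measure.volume_eq_prod, ← Measure.prod_restrict, lintegral_prod]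
    · congr 1
      funext r
      simp only
      rw [setLIntegral_const, Real.volume_Ioo]
      have : π - (-π) = 2*π := by ring
      rw [this]
      ring
    · apply Measurable.aemeasurable
      apply Measurable.mul
      · exact ENNReal.measurable_ofReal.comp measurable_fst
      · apply Measurable.mul
        · exact hg.comp (by fun_prop)
        · exact ENNReal.measurable_ofReal.comp (by fun_prop)
  simp only [step1]
  -- convert the iterated integral to an integral over univ ×ˢ Ioi 0
  have step2 :
      (∫⁻ t : ℝ, ∫⁻ r in Set.Ioi (0:ℝ), ENNReal.ofReal (2*π) * (ENNReal.ofReal r *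
          (g (Real.sqrt (s^2 + t^2 + r^2) + Real.sqrt (s^2 + (a - t)^2 + r^2))
            * ENNReal.ofReal (1 / (Real.sqrt (s^2 + t^2 + r^2)
                * Real.sqrt (s^2 + (a - t)^2 + r^2))))))
      = ∫⁻ q in Set.univ ×ˢ Set.Ioi (0:ℝ), ENNReal.ofReal (2*π) * (ENNReal.ofReal q.2 *
          (g (Real.sqrt (s^2 + q.1^2 + q.2^2) + Real.sqrt (s^2 + (a - q.1)^2 + q.2^2))
            * ENNReal.ofReal (1 / (Real.sqrt (s^2 + q.1^2 + q.2^2)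
                * Real.sqrt (s^2 + (a - q.1)^2 + q.2^2))))) := by
    rw [Measure.volume_eq_prod, ← Measure.prod_restrict, Measure.restrict_univ, lintegral_prod]
    apply Measurable.aemeasurable
    apply Measurable.mul measurable_const
    apply Measurable.mul
    · exact ENNReal.measurable_ofReal.comp measurable_snd
    · apply Measurable.mul
      · exact hg.comp (by fun_prop)
      · exact ENNReal.measurable_ofReal.comp (by fun_prop)
  rw [step2]
  -- pointwise equality with the Jacobian form
  have step3 : ∫⁻ q in Set.univ ×ˢ Set.Ioi (0:ℝ), ENNReal.ofReal (2*π) * (ENNReal.ofReal q.2 *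
          (g (Real.sqrt (s^2 + q.1^2 + q.2^2) + Real.sqrt (s^2 + (a - q.1)^2 + q.2^2))
            * ENNReal.ofReal (1 / (Real.sqrt (s^2 + q.1^2 + q.2^2)
                * Real.sqrt (s^2 + (a - q.1)^2 + q.2^2)))))
      = ∫⁻ q in Set.univ ×ˢ Set.Ioi (0:ℝ),
          ENNReal.ofReal (a * q.2 / (Real.sqrt (s^2+q.1^2+q.2^2) * Real.sqrt (s^2+(a-q.1)^2+q.2^2)))
            * (ENNReal.ofReal (2*π/a) * g ((Phi s a q).1 + (Phi s a q).2)) := by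
    apply setLIntegral_congr_fun (MeasurableSet.univ.prod measurableSet_Ioi)
    intro q hq
    beta_reduce
    have hq2 : (0:ℝ) < q.2 := hq.2
    have hu : (0:ℝ) < Real.sqrt (s^2 + q.1^2 + q.2^2) := Real.sqrt_pos.mpr (by positivity)
    have hv : (0:ℝ) < Real.sqrt (s^2 + (a - q.1)^2 + q.2^2) := Real.sqrt_pos.mpr (by positivity)
    rw [Phi]
    simp only
    set U := Real.sqrt (s^2 + q.1^2 + q.2^2) with hU
    set V := Real.sqrt (s^2 + (a - q.1)^2 + q.2^2) with hV
    calc ENNReal.ofReal (2*π) * (ENNReal.ofReal q.2 * (g (U+V) * ENNReal.ofReal (1/(U*V))))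
        = ENNReal.ofReal (2*π) * ENNReal.ofReal q.2 * ENNReal.ofReal (1/(U*V)) * g (U+V) := by
          ring
      _ = ENNReal.ofReal (2*π*q.2*(1/(U*V))) * g (U+V) := by
          rw [← ENNReal.ofReal_mul (by positivity), ← ENNReal.ofReal_mul (by positivity)]
      _ = ENNReal.ofReal (a*q.2/(U*V)*(2*π/a)) * g (U+V) := by
          congr 1
          field_simp
      _ = ENNReal.ofReal (a*q.2/(U*V)) * ENNReal.ofReal (2*π/a) * g (U+V) := by
          rw [ENNReal.ofReal_mul (by positivity)]
      _ = ENNReal.ofReal (a*q.2/(U*V)) * (ENNReal.ofReal (2*π/a) * g (U+V)) := by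
          ring
  rw [step3]
  have hSset := lintegral_Sset_eq s a hs ha (fun p => ENNReal.ofReal (2*π/a) * g (p.1+p.2))
  rw [← hSset]
  rw [lintegral_const_mul' _ _ ENNReal.ofReal_ne_top]
  rw [lintegral_Sset s a hs ha g hg]
  rw [← lintegral_const_mul' _ _ ENNReal.ofReal_ne_top]
  congr 1
  funext τ
  rw [← mul_assoc, mul_comm (ENNReal.ofReal (2*π/a)) (g τ), mul_assoc]
  congr 1
  rw [← ENNReal.ofReal_mul (by positivity)]
  congr 1
  field_simp

lemma norm_sq_coords (x : EuclideanSpace ℝ (Fin 3)) : ‖x‖^2 = x 0^2 + x 1^2 + x 2^2 := by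
  rw [EuclideanSpace.norm_eq, Real.sq_sqrt (by positivity), Fin.sum_univ_three]
  simp [Real.norm_eq_abs, sq_abs]

lemma key_E3 (s : ℝ) (hs : 0 < s) (ξ : EuclideanSpace ℝ (Fin 3)) (hξ : ξ ≠ 0)
    (g : ℝ → ENNReal) (hg : Measurable g) :
    ∫⁻ y : EuclideanSpace ℝ (Fin 3),
        g (Real.sqrt (s^2+‖y‖^2) + Real.sqrt (s^2+‖ξ-y‖^2))
          * ENNReal.ofReal (1 / (Real.sqrt (s^2+‖y‖^2) * Real.sqrt (s^2+‖ξ-y‖^2)))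
      = ∫⁻ τ, g τ * ENNReal.ofReal (2*π*Fa s ‖ξ‖ τ) := by
  set a := ‖ξ‖ with hadef
  have ha : 0 < a := norm_pos_iff.mpr hξ
  set w : EuclideanSpace ℝ (Fin 3) := a • EuclideanSpace.single (0 : Fin 3) (1:ℝ) with hwdef
  have hwnorm : ‖w‖ = a := by
    rw [hwdef, norm_smul]
    simp [EuclideanSpace.norm_single, abs_of_pos ha]
  set R := Submodule.reflection (Submodule.span ℝ {ξ - w})ᗮ with hRdef
  have hR : R ξ = w := Submodule.reflection_sub hwnorm.symm
  -- step 1: rotate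
  have hmp := (R.symm : EuclideanSpace ℝ (Fin 3) ≃ₗᵢ[ℝ] EuclideanSpace ℝ (Fin 3)).measurePreserving
  have hemb : MeasurableEmbedding (R.symm : EuclideanSpace ℝ (Fin 3) → EuclideanSpace ℝ (Fin 3)) :=
    (R.symm : EuclideanSpace ℝ (Fin 3) ≃ₗᵢ[ℝ] _).toHomeomorph.measurableEmbedding
  have step1 := (hmp.lintegral_comp_emb hemb (fun y =>
      g (Real.sqrt (s^2+‖y‖^2) + Real.sqrt (s^2+‖ξ-y‖^2))
        * ENNReal.ofReal (1 / (Real.sqrt (s^2+‖y‖^2) * Real.sqrt (s^2+‖ξ-y‖^2))))).symm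
  rw [step1]
  have hn2 : ∀ x, ‖ξ - R.symm x‖ = ‖w - x‖ := by
    intro x
    rw [← R.norm_map (ξ - R.symm x), map_sub, hR, R.apply_symm_apply]
  have hn1 : ∀ x : EuclideanSpace ℝ (Fin 3), ‖R.symm x‖ = ‖x‖ := fun x => R.symm.norm_map x
  simp only [hn1, hn2]
  -- step 2: coordinates
  have hwx : ∀ x : EuclideanSpace ℝ (Fin 3), ‖w - x‖^2 = (a - x 0)^2 + x 1^2 + x 2^2 := by
    intro x
    rw [norm_sq_coords (w - x)]
    have h0 : (w - x) 0 = a - x 0 := by simp [hwdef, EuclideanSpace.single_apply]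
    have h1 : (w - x) 1 = - x 1 := by simp [hwdef, EuclideanSpace.single_apply]
    have h2 : (w - x) 2 = - x 2 := by simp [hwdef, EuclideanSpace.single_apply]
    rw [h0, h1, h2]
    ring
  set Q : ℝ × ℝ × ℝ → ENNReal := fun z =>
      g (Real.sqrt (s^2 + z.1^2 + z.2.1^2 + z.2.2^2)
          + Real.sqrt (s^2 + (a - z.1)^2 + z.2.1^2 + z.2.2^2))
        * ENNReal.ofReal (1 / (Real.sqrt (s^2 + z.1^2 + z.2.1^2 + z.2.2^2)
            * Real.sqrt (s^2 + (a - z.1)^2 + z.2.1^2 + z.2.2^2))) with hQdef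
  have happ : ∀ x : EuclideanSpace ℝ (Fin 3),
      (MeasurableEquiv.prodCongr (MeasurableEquiv.refl ℝ) (MeasurableEquiv.finTwoArrow)
        ((MeasurableEquiv.piFinSuccAbove (fun _ : Fin 3 => ℝ) 0)
          ((MeasurableEquiv.toLp 2 (Fin 3 → ℝ)).symm x)) : ℝ × ℝ × ℝ)
      = (x 0, (x 1, x 2)) := by
    intro x
    simp [MeasurableEquiv.piFinSuccAbove, MeasurableEquiv.finTwoArrow, MeasurableEquiv.prodCongr,
      MeasurableEquiv.toLp, Fin.zero_succAbove, Fin.insertNthEquiv]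
    and_intros <;> rfl
  have hcomp : ∀ x : EuclideanSpace ℝ (Fin 3),
      g (Real.sqrt (s^2+‖x‖^2) + Real.sqrt (s^2+‖w-x‖^2))
        * ENNReal.ofReal (1 / (Real.sqrt (s^2+‖x‖^2) * Real.sqrt (s^2+‖w-x‖^2)))
      = Q (MeasurableEquiv.prodCongr (MeasurableEquiv.refl ℝ) (MeasurableEquiv.finTwoArrow)
          ((MeasurableEquiv.piFinSuccAbove (fun _ : Fin 3 => ℝ) 0)
            ((MeasurableEquiv.toLp 2 (Fin 3 → ℝ)).symm x))) := by
    intro x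
    rw [happ x, hQdef]
    simp only
    have e1 : s^2 + (x 0)^2 + ((x 1)^2 + (x 2)^2) = s^2+‖x‖^2 := by
      rw [norm_sq_coords x]; ring
    have e2 : s^2 + (a - x 0)^2 + ((x 1)^2 + (x 2)^2) = s^2+‖w-x‖^2 := by
      rw [hwx x]; ring
    rw [show s^2 + (x 0)^2 + (x 1)^2 + (x 2)^2 = s^2 + (x 0)^2 + ((x 1)^2 + (x 2)^2) by ring,
      show s^2 + (a - x 0)^2 + (x 1)^2 + (x 2)^2 = s^2 + (a - x 0)^2 + ((x 1)^2 + (x 2)^2) by ring,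
      e1, e2]
  simp only [hcomp]
  rw [(EuclideanSpace.volume_preserving_symm_measurableEquiv_toLp (Fin 3)).lintegral_comp_emb
    (MeasurableEquiv.measurableEmbedding _) (fun v =>
      Q (MeasurableEquiv.prodCongr (MeasurableEquiv.refl ℝ) (MeasurableEquiv.finTwoArrow)
        ((MeasurableEquiv.piFinSuccAbove (fun _ : Fin 3 => ℝ) 0) v)))]
  rw [(volume_preserving_piFinSuccAbove (fun _ : Fin 3 => ℝ) 0).lintegral_comp_emb
    (MeasurableEquiv.measurableEmbedding _) (fun p =>
      Q (MeasurableEquiv.prodCongr (MeasurableEquiv.refl ℝ) (MeasurableEquiv.finTwoArrow) p))]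
  have hmp3 : MeasurePreserving
      (⇑(MeasurableEquiv.prodCongr (MeasurableEquiv.refl ℝ) (MeasurableEquiv.finTwoArrow (α := ℝ))))
      (volume : Measure (ℝ × (Fin 2 → ℝ))) (volume : Measure (ℝ × ℝ × ℝ)) :=
    (MeasurePreserving.id volume).prod (volume_preserving_finTwoArrow ℝ)
  rw [hmp3.lintegral_comp_emb
    (MeasurableEquiv.measurableEmbedding
      (MeasurableEquiv.prodCongr (MeasurableEquiv.refl ℝ) (MeasurableEquiv.finTwoArrow))) Q]
  exact key_coords s a hs ha g hg

lemma dd_lt (s : ℝ) (hs : 0 < s) (p : EuclideanSpace ℝ (Fin 3) × ℝ) :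
    doubleDensity3 s p < 2 * Real.pi := by
  unfold doubleDensity3
  split
  · rename_i h
    set a := ‖p.1‖ with ha
    have h0 : (0:ℝ) ≤ (2*s)^2 + a^2 := by positivity
    have hτ0 : 0 ≤ p.2 := le_trans (Real.sqrt_nonneg _) h
    have hτsq : (2*s)^2 + a^2 ≤ p.2^2 := by
      have := Real.sq_sqrt h0
      nlinarith [Real.sqrt_nonneg ((2*s)^2 + a^2)]
    have hden : (0:ℝ) < p.2^2 - a^2 := by nlinarith
    have hfrac : 0 < 4*s^2/(p.2^2 - a^2) := by positivity
    have h1 : 1 - 4*s^2/(p.2^2-a^2) < 1 := by linarith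
    have : Real.sqrt (1 - 4*s^2/(p.2^2-a^2)) < 1 := by
      rcases le_or_gt (1 - 4*s^2/(p.2^2-a^2)) 0 with h2 | h2
      · rw [Real.sqrt_eq_zero'.mpr h2]; norm_num
      · calc Real.sqrt (1 - 4*s^2/(p.2^2-a^2)) < Real.sqrt 1 := Real.sqrt_lt_sqrt h2.le h1
          _ = 1 := Real.sqrt_one
    nlinarith [Real.pi_pos]
  · positivity

lemma dd_sSup (s : ℝ) (hs : 0 < s) :
    sSup (Set.range (doubleDensity3 s)) = 2 * Real.pi := by
  have hub : ∀ x ∈ Set.range (doubleDensity3 s), x ≤ 2 * Real.pi := by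
    rintro x ⟨p, rfl⟩; exact (dd_lt s hs p).le
  refine IsLUB.csSup_eq ⟨hub, ?_⟩ ⟨_, ⟨(0,0), rfl⟩⟩
  intro b hb
  have key : Tendsto (fun T : ℝ => doubleDensity3 s (0, T)) atTop (nhds (2 * Real.pi)) := by
    have h1 : Tendsto (fun T : ℝ => 2 * Real.pi * Real.sqrt (1 - 4*s^2/(T^2 - ‖(0 : EuclideanSpace ℝ (Fin 3))‖^2))) atTop (nhds (2 * Real.pi)) := by
      have hT2 : Tendsto (fun T : ℝ => T^2 - ‖(0 : EuclideanSpace ℝ (Fin 3))‖^2) atTop atTop := by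
        simp only [norm_zero]
        simpa using (tendsto_pow_atTop (two_ne_zero)).atTop_add tendsto_const_nhds (C := 0)
      have h3 : Tendsto (fun T : ℝ => 1 - 4*s^2/(T^2 - ‖(0 : EuclideanSpace ℝ (Fin 3))‖^2)) atTop (nhds 1) := by
        have := Tendsto.div_atTop (tendsto_const_nhds (x := 4*s^2)) hT2
        simpa using tendsto_const_nhds.sub this
      have h4 := (Real.continuous_sqrt.continuousAt (x := (1:ℝ))).tendsto.comp h3
      rw [Real.sqrt_one] at h4
      simpa using tendsto_const_nhds.mul h4
    refine h1.congr' ?_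
    filter_upwards [eventually_ge_atTop (2*s)] with T hT
    have : Real.sqrt ((2*s)^2 + ‖(0 : EuclideanSpace ℝ (Fin 3))‖^2) ≤ T := by
      simp only [norm_zero]
      rw [show (2*s)^2 + 0^2 = (2*s)^2 by ring, Real.sqrt_sq (by positivity)]
      exact hT
    simp only [doubleDensity3, this, if_true]
  refine le_of_tendsto key ?_
  filter_upwards with T
  exact hb ⟨(0, T), rfl⟩


lemma dd_eq_Fa (s : ℝ) (ξ : EuclideanSpace ℝ (Fin 3)) (τ : ℝ) :
    doubleDensity3 s (ξ, τ) = 2*π*Fa s ‖ξ‖ τ := by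
  unfold doubleDensity3 Fa
  simp only
  split_ifs with h
  · rfl
  · ring

lemma dd_meas (s : ℝ) : Measurable fun p : EuclideanSpace ℝ (Fin 3) × ℝ =>
    ENNReal.ofReal (doubleDensity3 s p) := by
  apply ENNReal.measurable_ofReal.comp
  unfold doubleDensity3
  apply Measurable.ite
  · apply measurableSet_le (by fun_prop) measurable_snd
  · fun_prop
  · fun_prop

lemma conv_eq (s : ℝ) (hs : 0 < s) :
    ((hypMeasure 3 s).conv (hypMeasure 3 s) =
      (volume : Measure (EuclideanSpace ℝ (Fin 3) × ℝ)).withDensity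
        (fun p => ENNReal.ofReal (doubleDensity3 s p))) := by
  have he : Measurable fun y : EuclideanSpace ℝ (Fin 3) => Real.sqrt (s^2 + ‖y‖^2) := by
    fun_prop
  have hD : Measurable fun y : EuclideanSpace ℝ (Fin 3) =>
      ENNReal.ofReal (1 / Real.sqrt (s^2 + ‖y‖^2)) := by fun_prop
  have hφ : Measurable (fun y : EuclideanSpace ℝ (Fin 3) => (y, Real.sqrt (s^2+‖y‖^2))) :=
    measurable_id.prodMk he
  haveI hSF : SigmaFinite ((volume : Measure (EuclideanSpace ℝ (Fin 3))).withDensity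
      fun y => ENNReal.ofReal (1/Real.sqrt (s^2+‖y‖^2))) := by
    exact SigmaFinite.withDensity_ofReal _
  have main : ∀ g : EuclideanSpace ℝ (Fin 3) × ℝ → ENNReal, Measurable g →
      (∫⁻ p, g p ∂((hypMeasure 3 s).conv (hypMeasure 3 s)))
        = ∫⁻ p, g p ∂((volume : Measure (EuclideanSpace ℝ (Fin 3) × ℝ)).withDensity
            (fun p => ENNReal.ofReal (doubleDensity3 s p))) := by
    intro g hg
    -- abbreviations
    set e : EuclideanSpace ℝ (Fin 3) → ℝ := fun y => Real.sqrt (s^2 + ‖y‖^2) with hedef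
    set D : EuclideanSpace ℝ (Fin 3) → ENNReal := fun y => ENNReal.ofReal (1 / e y) with hDdef
    -- LHS
    have hco : ((fun p : (EuclideanSpace ℝ (Fin 3) × ℝ) × (EuclideanSpace ℝ (Fin 3) × ℝ) =>
          p.1 + p.2) ∘ (Prod.map (fun y => (y, e y)) (fun y => (y, e y))))
        = fun q : EuclideanSpace ℝ (Fin 3) × EuclideanSpace ℝ (Fin 3) =>
            (q.1 + q.2, e q.1 + e q.2) := by
      funext q
      simp [Prod.map, Prod.ext_iff]
    have step0 : ∫⁻ p, g p ∂((hypMeasure 3 s).conv (hypMeasure 3 s))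
        = ∫⁻ q : EuclideanSpace ℝ (Fin 3) × EuclideanSpace ℝ (Fin 3),
            g (q.1 + q.2, e q.1 + e q.2)
            ∂((volume.withDensity D).prod (volume.withDensity D)) := by
      unfold hypMeasure Measure.conv
      rw [Measure.map_prod_map _ _ hφ hφ]
      rw [Measure.map_map measurable_add (hφ.prodMap hφ)]
      rw [hco]  -- might fail: composition shape
      exact lintegral_map hg (by fun_prop)
    rw [step0]
    have hint2 : Measurable fun q : EuclideanSpace ℝ (Fin 3) × EuclideanSpace ℝ (Fin 3) =>
        g (q.1 + q.2, e q.1 + e q.2) := by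
      apply hg.comp
      exact (measurable_fst.add measurable_snd).prodMk ((he.comp measurable_fst).add (he.comp measurable_snd))
    rw [lintegral_prod _ hint2.aemeasurable]
    -- peel the two densities
    have hinner_meas : ∀ y, Measurable fun z : EuclideanSpace ℝ (Fin 3) =>
        g (y + z, e y + e z) := by
      intro y
      apply hg.comp
      exact (measurable_const.add measurable_id').prodMk (measurable_const.add he)
    have step1 : (∫⁻ y, ∫⁻ z, g (y + z, e y + e z) ∂(volume.withDensity D) ∂(volume.withDensity D))
        = ∫⁻ y, D y * ∫⁻ z, D z * g (y + z, e y + e z) ∂volume ∂volume := by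
      rw [lintegral_withDensity_eq_lintegral_mul _ (by fun_prop : Measurable D) ?hmm]
      case hmm =>
        exact Measurable.lintegral_prod_right' (f := fun q :
          EuclideanSpace ℝ (Fin 3) × EuclideanSpace ℝ (Fin 3) => g (q.1 + q.2, e q.1 + e q.2))
          hint2
      congr 1
      funext y
      simp only [Pi.mul_apply]
      congr 1
      rw [lintegral_withDensity_eq_lintegral_mul _ (by fun_prop : Measurable D) (hinner_meas y)]
      rfl
    rw [step1]
    -- translate inner integral
    have step2 : ∀ y : EuclideanSpace ℝ (Fin 3),
        (∫⁻ z, D z * g (y + z, e y + e z) ∂volume)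
          = ∫⁻ ξ, D (ξ - y) * g (ξ, e y + e (ξ - y)) ∂volume := by
      intro y
      have h := lintegral_add_left_eq_self
        (μ := (volume : Measure (EuclideanSpace ℝ (Fin 3))))
        (fun ξ => D (ξ - y) * g (ξ, e y + e (ξ - y))) y
      rw [← h]
      congr 1
      funext z
      simp [add_sub_cancel_left]
    have step3 : (∫⁻ y, D y * ∫⁻ z, D z * g (y + z, e y + e z) ∂volume ∂volume)
        = ∫⁻ y, ∫⁻ ξ, D y * (D (ξ - y) * g (ξ, e y + e (ξ - y))) ∂volume ∂volume := by
      congr 1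
      funext y
      rw [step2 y, ← lintegral_const_mul' _ _ ENNReal.ofReal_ne_top]
    rw [step3]
    rw [lintegral_lintegral_swap]
    swap
    · apply Measurable.aemeasurable
      have : (Function.uncurry fun y ξ => D y * (D (ξ - y) * g (ξ, e y + e (ξ - y))))
          = fun p : EuclideanSpace ℝ (Fin 3) × EuclideanSpace ℝ (Fin 3) =>
              D p.1 * (D (p.2 - p.1) * g (p.2, e p.1 + e (p.2 - p.1))) := by
        funext p; obtain ⟨y, ξ⟩ := p; rfl
      rw [this]
      have hDm : Measurable D := by fun_prop
      apply ((hDm.comp measurable_fst).mul _)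
      apply ((hDm.comp (measurable_snd.sub measurable_fst)).mul _)
      apply hg.comp
      exact measurable_snd.prodMk ((he.comp measurable_fst).add (he.comp (measurable_snd.sub measurable_fst)))
    -- RHS
    rw [lintegral_withDensity_eq_lintegral_mul _ (dd_meas s) hg]
    simp only [Pi.mul_apply]
    rw [Measure.volume_eq_prod, lintegral_prod (fun p => ENNReal.ofReal (doubleDensity3 s p) * g p) ((dd_meas s).mul hg).aemeasurable]
    -- match a.e. in ξ
    apply lintegral_congr_ae
    have h0 : ∀ᵐ ξ : EuclideanSpace ℝ (Fin 3), ξ ≠ 0 := by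
      rw [ae_iff]
      have : {ξ : EuclideanSpace ℝ (Fin 3) | ¬ ξ ≠ 0} = {0} := by
        ext ξ; simp
      rw [this]
      simp
    filter_upwards [h0] with ξ hξ
    have hkey := key_E3 s hs ξ hξ (fun τ => g (ξ, τ)) (hg.comp measurable_prodMk_left)
    have hl : (∫⁻ y, D y * (D (ξ - y) * g (ξ, e y + e (ξ - y))) ∂volume)
        = ∫⁻ y : EuclideanSpace ℝ (Fin 3),
            (fun τ => g (ξ, τ)) (Real.sqrt (s^2+‖y‖^2) + Real.sqrt (s^2+‖ξ-y‖^2))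
              * ENNReal.ofReal (1 / (Real.sqrt (s^2+‖y‖^2) * Real.sqrt (s^2+‖ξ-y‖^2))) := by
      congr 1
      funext y
      rw [hDdef, hedef]
      simp only
      rw [← mul_assoc, ← ENNReal.ofReal_mul (by positivity), one_div_mul_one_div]
      ring
    rw [hl, hkey]
    congr 1
    funext τ
    rw [dd_eq_Fa s ξ τ]
    ring
  ext A hA
  have h1 := main (A.indicator fun _ => 1) (measurable_const.indicator hA)
  rwa [lintegral_indicator_const hA, lintegral_indicator_const hA, one_mul, one_mul] at h1

end Aux

theorem stmt_12 (s : ℝ) (hs : 0 < s) :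
    ((hypMeasure 3 s).conv (hypMeasure 3 s) =
      (volume : Measure (EuclideanSpace ℝ (Fin 3) × ℝ)).withDensity
        (fun p => ENNReal.ofReal (doubleDensity3 s p))) ∧
    sSup (Set.range (doubleDensity3 s)) = 2 * Real.pi ∧
    ∀ p, doubleDensity3 s p < 2 * Real.pi :=
  ⟨conv_eq s hs, dd_sSup s hs, dd_lt s hs⟩
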